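/- Let σ₁, σ₂ : ℝ/ℤ → ℝ/ℤ be measurable, and define h(x,y) = (x + σ₂(y), y), v(x,y) = (x, y + σ₁(x)) on the torus 𝕋². Suppose the sets N₁ = σ₁⁻¹(ℚ/ℤ) and N₂ = σ₂⁻¹(ℚ/ℤ) have Haar measure zero. Then any finite measure μ on 𝕋² that is invariant under both h and v and absolutely continuous with respect to Haar measure λ_{𝕋²} is proportional to λ_{𝕋²}. -/

import Mathlib

open MeasureTheory
open scoped ENNReal

/-- The image of ℚ/ℤ in the circle ℝ/ℤ. -/
def ratTorus : Set UnitAddCircle := {x | ∃ q : ℚ, ((q : ℝ) : UnitAddCircle) = x}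

noncomputable section Stmt19Aux

open ProbabilityTheory Set

namespace Stmt19

lemma integrable_cm (ν : Measure UnitAddCircle) [IsFiniteMeasure ν] (g : C(UnitAddCircle, ℂ)) :
    Integrable g ν :=
  g.continuous.integrable_of_hasCompactSupport (HasCompactSupport.of_compactSpace g)

lemma cont_integral (ν : Measure UnitAddCircle) [IsFiniteMeasure ν] :
    Continuous fun g : C(UnitAddCircle, ℂ) => ∫ x, g x ∂ν := by
  refine (LipschitzWith.of_dist_le_mul (K := (ν univ).toReal.toNNReal) ?_).continuous
  intro g₁ g₂
  rw [dist_eq_norm, ← integral_sub (integrable_cm ν g₁) (integrable_cm ν g₂)]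
  have hb : ∀ x, ‖g₁ x - g₂ x‖ ≤ dist g₁ g₂ := by
    intro x
    rw [dist_eq_norm, ← ContinuousMap.sub_apply]
    exact ContinuousMap.norm_coe_le_norm _ x
  calc ‖∫ x, (g₁ x - g₂ x) ∂ν‖ ≤ dist g₁ g₂ * (ν univ).toReal :=
        norm_integral_le_of_norm_le_const (Filter.Eventually.of_forall hb)
    _ ≤ _ := by
        rw [Real.coe_toNNReal _ ENNReal.toReal_nonneg]
        ring_nf; rfl

/-- Two finite measures on the circle with the same Fourier coefficients are equal. -/
lemma ext_fourier {ν₁ ν₂ : Measure UnitAddCircle} [IsFiniteMeasure ν₁] [IsFiniteMeasure ν₂]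
    (h : ∀ n : ℤ, ∫ x, fourier n x ∂ν₁ = ∫ x, fourier n x ∂ν₂) : ν₁ = ν₂ := by
  have key : ∀ g : C(UnitAddCircle, ℂ), ∫ x, g x ∂ν₁ = ∫ x, g x ∂ν₂ := by
    have hspan : ∀ g ∈ Submodule.span ℂ (Set.range (@fourier 1)),
        ∫ x, g x ∂ν₁ = ∫ x, g x ∂ν₂ := by
      intro g hg
      induction hg using Submodule.span_induction with
      | mem g hg => obtain ⟨n, rfl⟩ := hg; exact h n
      | zero => simp
      | add g₁ g₂ _ _ h₁ h₂ =>
          simp only [ContinuousMap.add_apply]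
          rw [integral_add (integrable_cm ν₁ g₁) (integrable_cm ν₁ g₂),
            integral_add (integrable_cm ν₂ g₁) (integrable_cm ν₂ g₂), h₁, h₂]
      | smul c g _ hg =>
          simp only [ContinuousMap.smul_apply, smul_eq_mul]
          rw [integral_const_mul, integral_const_mul, hg]
    intro g
    have hS : IsClosed {g : C(UnitAddCircle, ℂ) | ∫ x, g x ∂ν₁ = ∫ x, g x ∂ν₂} :=
      isClosed_eq (cont_integral ν₁) (cont_integral ν₂)
    have hmem : g ∈ closure ((Submodule.span ℂ (Set.range (@fourier 1)) : Submodule ℂ _) : Set _) := by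
      rw [← Submodule.topologicalClosure_coe, span_fourier_closure_eq_top]
      trivial
    exact hS.closure_subset_iff.mpr hspan hmem
  apply ext_of_forall_lintegral_eq_of_IsFiniteMeasure
  intro f
  have hfc : Continuous fun x => (RCLike.ofReal (K := ℂ) (f x : ℝ)) :=
    RCLike.continuous_ofReal.comp (NNReal.continuous_coe.comp f.continuous)
  have hkey := key ⟨fun x => (RCLike.ofReal (K := ℂ) (f x : ℝ)), hfc⟩
  simp only [ContinuousMap.coe_mk] at hkey
  have hre : ∫ x, (f x : ℝ) ∂ν₁ = ∫ x, (f x : ℝ) ∂ν₂ := by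
    rwa [integral_ofReal, integral_ofReal, RCLike.ofReal_inj] at hkey
  have hi : ∀ (ν : Measure UnitAddCircle) [IsFiniteMeasure ν],
      Integrable (fun x => (f x : ℝ)) ν := fun ν _ =>
    (NNReal.continuous_coe.comp f.continuous).integrable_of_hasCompactSupport
      (HasCompactSupport.of_compactSpace _)
  rw [lintegral_coe_eq_integral _ (hi ν₁), lintegral_coe_eq_integral _ (hi ν₂), hre]

lemma fourier_add_apply (n : ℤ) (x a : UnitAddCircle) :
    fourier n (x + a) = fourier n x * fourier n a := by
  simp [fourier_apply, smul_add, AddCircle.toCircle_add]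

lemma fourier_ne_one {n : ℤ} (hn : n ≠ 0) {a : UnitAddCircle} (ha : a ∉ ratTorus) :
    (fourier n a : ℂ) ≠ 1 := by
  intro hfa
  apply ha
  have h1 : AddCircle.toCircle (n • a) = 1 := by
    rw [fourier_apply] at hfa
    exact OneMemClass.coe_eq_one.mp hfa
  have h0 : n • a = 0 := by
    apply AddCircle.injective_toCircle one_ne_zero
    rw [h1, AddCircle.toCircle_zero]
  obtain ⟨r, rfl⟩ := QuotientAddGroup.mk_surjective a
  rw [← QuotientAddGroup.mk_zsmul, QuotientAddGroup.eq_zero_iff] at h0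
  obtain ⟨k, hk⟩ := AddSubgroup.mem_zmultiples_iff.mp h0
  refine ⟨(k : ℚ) / (n : ℚ), ?_⟩
  have hn' : (n : ℝ) ≠ 0 := Int.cast_ne_zero.mpr hn
  have hk' : (k : ℝ) = (n : ℝ) * r := by
    have h2 := hk
    push_cast [zsmul_eq_mul] at h2
    linarith [h2]
  have hr : r = (k : ℝ) / (n : ℝ) := by
    rw [eq_div_iff hn']
    linarith [hk']
  rw [hr]
  push_cast
  rfl

/-- A finite measure invariant under translation by an irrational point is determined
by its total mass. -/
lemma eq_of_rot_invariant {ν₁ ν₂ : Measure UnitAddCircle} [IsFiniteMeasure ν₁] [IsFiniteMeasure ν₂]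
    {a : UnitAddCircle} (ha : a ∉ ratTorus)
    (h₁ : ν₁.map (· + a) = ν₁) (h₂ : ν₂.map (· + a) = ν₂) (hu : ν₁ univ = ν₂ univ) :
    ν₁ = ν₂ := by
  have hcoeff : ∀ (ν : Measure UnitAddCircle) [IsFiniteMeasure ν], ν.map (· + a) = ν →
      ∀ n : ℤ, n ≠ 0 → ∫ x, fourier n x ∂ν = 0 := by
    intro ν _ hν n hn
    have hmeas : Measurable fun x : UnitAddCircle => x + a := measurable_add_const a
    have h1 : ∫ x, fourier n x ∂ν = ∫ x, fourier n (x + a) ∂ν := by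
      conv_lhs => rw [← hν]
      rw [integral_map hmeas.aemeasurable
        (Continuous.aestronglyMeasurable (map_continuous (fourier n)))]
    have h2 : ∫ x, fourier n (x + a) ∂ν = (∫ x, fourier n x ∂ν) * fourier n a := by
      simp_rw [fourier_add_apply]
      rw [integral_mul_const]
    have h3 := h1.trans h2
    have h4 : (∫ x, fourier n x ∂ν) * ((fourier n a : ℂ) - 1) = 0 := by
      linear_combination -h3
    rcases mul_eq_zero.mp h4 with hz | hc
    · exact hz
    · exact absurd (sub_eq_zero.mp hc) (fourier_ne_one hn ha)
  apply ext_fourier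
  intro n
  rcases eq_or_ne n 0 with rfl | hn
  · simp only [fourier_zero, integral_const, smul_eq_mul, mul_one, measureReal_def, hu]
  · rw [hcoeff ν₁ h₁ n hn, hcoeff ν₂ h₂ n hn]

lemma volume_rot_invariant (a : UnitAddCircle) :
    (volume : Measure UnitAddCircle).map (· + a) = volume :=
  (measurePreserving_add_right volume a).map_eq

instance : IsProbabilityMeasure (volume : Measure UnitAddCircle) :=
  ⟨UnitAddCircle.measure_univ⟩

/-- A rotation-invariant (by an irrational) probability measure on the circle is Haar. -/
lemma eq_volume_of_rot_invariant {ν : Measure UnitAddCircle} [IsProbabilityMeasure ν]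
    {a : UnitAddCircle} (ha : a ∉ ratTorus) (h : ν.map (· + a) = ν) : ν = volume :=
  eq_of_rot_invariant ha h (volume_rot_invariant a) (by simp)

/-- The kernel `y ↦ (κ y).map (· + τ y)`. -/
def shiftKernel (κ : Kernel UnitAddCircle UnitAddCircle) [IsSFiniteKernel κ]
    {τ : UnitAddCircle → UnitAddCircle} (hτ : Measurable τ) :
    Kernel UnitAddCircle UnitAddCircle where
  toFun y := (κ y).map (· + τ y)
  measurable' := by
    apply Measure.measurable_of_measurable_coe
    intro s hs
    have hset : MeasurableSet {p : UnitAddCircle × UnitAddCircle | p.2 + τ p.1 ∈ s} :=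
      (measurable_snd.add (hτ.comp measurable_fst)) hs
    have := Kernel.measurable_kernel_prodMk_left (κ := κ) hset
    convert this using 1
    ext y
    rw [Measure.map_apply (measurable_add_const (τ y)) hs]
    rfl

lemma shiftKernel_apply (κ : Kernel UnitAddCircle UnitAddCircle) [IsSFiniteKernel κ]
    {τ : UnitAddCircle → UnitAddCircle} (hτ : Measurable τ) (y : UnitAddCircle) :
    shiftKernel κ hτ y = (κ y).map (· + τ y) := rfl

instance (κ : Kernel UnitAddCircle UnitAddCircle) [IsMarkovKernel κ]
    {τ : UnitAddCircle → UnitAddCircle} (hτ : Measurable τ) :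
    IsMarkovKernel (shiftKernel κ hτ) :=
  ⟨fun y => by
    rw [shiftKernel_apply]
    exact Measure.isProbabilityMeasure_map (measurable_add_const (τ y)).aemeasurable⟩

lemma map_compProd_shift (ν : Measure UnitAddCircle) [IsFiniteMeasure ν]
    (κ : Kernel UnitAddCircle UnitAddCircle) [IsMarkovKernel κ]
    {τ : UnitAddCircle → UnitAddCircle} (hτ : Measurable τ) :
    (ν ⊗ₘ κ).map (fun p => (p.1, p.2 + τ p.1)) = ν ⊗ₘ shiftKernel κ hτ := by
  have hF : Measurable fun p : UnitAddCircle × UnitAddCircle => (p.1, p.2 + τ p.1) :=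
    measurable_fst.prodMk (measurable_snd.add (hτ.comp measurable_fst))
  ext s hs
  rw [Measure.map_apply hF hs, Measure.compProd_apply (hF hs), Measure.compProd_apply hs]
  refine lintegral_congr fun y => ?_
  rw [shiftKernel_apply, Measure.map_apply (measurable_add_const (τ y)) (measurable_prodMk_left hs)]
  rfl

lemma prod_smul_right (μ ν : Measure UnitAddCircle) [SFinite ν] (c : ℝ≥0∞) :
    μ.prod (c • ν) = c • (μ.prod ν) := by
  ext s hs
  rw [Measure.smul_apply, Measure.prod_apply hs, Measure.prod_apply hs, smul_eq_mul,
    ← lintegral_const_mul _ (measurable_measure_prodMk_left hs)]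
  simp [Measure.smul_apply]

lemma smul_cancel {m₁ m₂ : Measure (UnitAddCircle × UnitAddCircle)} {c : ℝ≥0∞}
    (hc : c ≠ 0) (hc' : c ≠ ⊤) (h : c • m₁ = c • m₂) : m₁ = m₂ := by
  ext s hs
  have h2 := congrArg (fun m : Measure (UnitAddCircle × UnitAddCircle) => m s) h
  simp only [Measure.smul_apply, smul_eq_mul] at h2
  exact (ENNReal.mul_right_inj hc hc').mp h2

end Stmt19

end Stmt19Aux

open ProbabilityTheory Set in
/-- If σ₁⁻¹(ℚ/ℤ) and σ₂⁻¹(ℚ/ℤ) are Haar-null, then every finite measure on 𝕋²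
invariant under h(x,y) = (x+σ₂(y), y) and v(x,y) = (x, y+σ₁(x)) and absolutely
continuous w.r.t. Haar measure is proportional to Haar measure. -/
theorem stmt_19 (σ₁ σ₂ : UnitAddCircle → UnitAddCircle)
    (hσ₁ : Measurable σ₁) (hσ₂ : Measurable σ₂)
    (hN₁ : volume (σ₁ ⁻¹' ratTorus) = 0) (hN₂ : volume (σ₂ ⁻¹' ratTorus) = 0)
    (μ : Measure (UnitAddCircle × UnitAddCircle)) [IsFiniteMeasure μ]
    (hμh : μ.map (fun p => (p.1 + σ₂ p.2, p.2)) = μ)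
    (hμv : μ.map (fun p => (p.1, p.2 + σ₁ p.1)) = μ)
    (hac : μ ≪ (volume : Measure (UnitAddCircle × UnitAddCircle))) :
    ∃ c : NNReal, μ = c • (volume : Measure (UnitAddCircle × UnitAddCircle)) := by
  classical
  have hvol2 : (volume : Measure (UnitAddCircle × UnitAddCircle)) =
      (volume : Measure UnitAddCircle).prod volume := Measure.volume_eq_prod _ _
  have hswap : Measurable (Prod.swap : UnitAddCircle × UnitAddCircle → UnitAddCircle × UnitAddCircle) :=
    measurable_swap
  have hshift₂ : Measurable fun p : UnitAddCircle × UnitAddCircle => (p.1, p.2 + σ₂ p.1) :=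
    measurable_fst.prodMk (measurable_snd.add (hσ₂.comp measurable_fst))
  have hh : Measurable fun p : UnitAddCircle × UnitAddCircle => (p.1 + σ₂ p.2, p.2) :=
    (measurable_fst.add (hσ₂.comp measurable_snd)).prodMk measurable_snd
  set μ' : Measure (UnitAddCircle × UnitAddCircle) := μ.map Prod.swap with hμ'def
  haveI : IsFiniteMeasure μ' := by
    rw [hμ'def]; infer_instance
  have hinv' : μ'.map (fun p => (p.1, p.2 + σ₂ p.1)) = μ' := by
    rw [hμ'def, Measure.map_map hshift₂ hswap]
    have hcomp : ((fun p : UnitAddCircle × UnitAddCircle => (p.1, p.2 + σ₂ p.1)) ∘ Prod.swap)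
        = Prod.swap ∘ (fun p : UnitAddCircle × UnitAddCircle => (p.1 + σ₂ p.2, p.2)) := rfl
    rw [hcomp, ← Measure.map_map hswap hh, hμh]
  set ν : Measure UnitAddCircle := μ'.fst with hνdef
  have hdis : ν ⊗ₘ μ'.condKernel = μ' := μ'.disintegrate _
  have h2 : μ' = μ'.fst ⊗ₘ Stmt19.shiftKernel μ'.condKernel hσ₂ := by
    conv_lhs => rw [← hinv', ← hdis]
    rw [Stmt19.map_compProd_shift ν μ'.condKernel hσ₂]
  have hae := ProbabilityTheory.eq_condKernel_of_measure_eq_compProd _ h2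
  have hμ'ac : μ' ≪ (volume : Measure (UnitAddCircle × UnitAddCircle)) := by
    have hvs : (volume : Measure (UnitAddCircle × UnitAddCircle)).map Prod.swap = volume := by
      rw [hvol2, Measure.prod_swap]
    rw [hμ'def]
    conv_rhs => rw [← hvs]
    exact hac.map hswap
  have hνac : ν ≪ (volume : Measure UnitAddCircle) := by
    have hvf : (volume : Measure (UnitAddCircle × UnitAddCircle)).fst = volume := by
      rw [hvol2, Measure.fst_prod]
    rw [hνdef]
    conv_rhs => rw [← hvf]
    exact hμ'ac.map measurable_fst
  have hirr : ∀ᵐ y ∂ν, σ₂ y ∉ ratTorus := by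
    rw [MeasureTheory.ae_iff]
    refine measure_mono_null ?_ (hνac hN₂)
    intro y hy
    simpa using hy
  have hker : μ'.condKernel =ᵐ[ν] Kernel.const UnitAddCircle (volume : Measure UnitAddCircle) := by
    filter_upwards [hae, hirr] with y h1 hy2
    rw [Kernel.const_apply]
    haveI : IsProbabilityMeasure (μ'.condKernel y) := inferInstance
    refine Stmt19.eq_volume_of_rot_invariant hy2 ?_
    conv_rhs => rw [← h1]
    rw [Stmt19.shiftKernel_apply, ← h1, Stmt19.shiftKernel_apply]
  have hprod' : μ' = ν.prod volume := by
    conv_lhs => rw [← hdis]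
    rw [Measure.compProd_congr hker, Measure.compProd_const]
  have hμprod : μ = (volume : Measure UnitAddCircle).prod ν := by
    have hswsw : μ = μ'.map Prod.swap := by
      rw [hμ'def, Measure.map_map hswap hswap]
      have : (Prod.swap ∘ Prod.swap : UnitAddCircle × UnitAddCircle → _) = id := rfl
      rw [this, Measure.map_id]
    rw [hswsw, hprod', Measure.prod_swap]
  haveI : IsFiniteMeasure ν := by rw [hνdef]; infer_instance
  rcases eq_or_ne (ν univ) 0 with h0 | h0
  · refine ⟨0, ?_⟩
    have hν0 : ν = 0 := Measure.measure_univ_eq_zero.mp h0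
    rw [hμprod, hν0]
    simp
  · have hfin : ν univ ≠ ⊤ := measure_ne_top ν _
    set c : ℝ≥0∞ := ν univ with hcdef
    set ν₀ : Measure UnitAddCircle := c⁻¹ • ν with hν₀def
    haveI : IsProbabilityMeasure ν₀ := by
      constructor
      rw [hν₀def]
      simp only [Measure.smul_apply, smul_eq_mul]
      rw [← hcdef, ENNReal.inv_mul_cancel h0 hfin]
    have hν₀c : c • ν₀ = ν := by
      rw [hν₀def, smul_smul, ENNReal.mul_inv_cancel h0 hfin, one_smul]
    have hprodsm : (volume : Measure UnitAddCircle).prod ν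
        = c • ((volume : Measure UnitAddCircle).prod ν₀) := by
      conv_lhs => rw [← hν₀c]
      exact Stmt19.prod_smul_right _ _ _
    have hinv₀ : ((volume : Measure UnitAddCircle).prod ν₀).map (fun p => (p.1, p.2 + σ₁ p.1))
        = (volume : Measure UnitAddCircle).prod ν₀ := by
      have hv2 := hμv
      rw [hμprod, hprodsm, Measure.map_smul] at hv2
      exact Stmt19.smul_cancel h0 hfin hv2
    set ρ : Measure (UnitAddCircle × UnitAddCircle) := (volume : Measure UnitAddCircle).prod ν₀
      with hρdef
    have hρfst : ρ.fst = (volume : Measure UnitAddCircle) := Measure.fst_prod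
    have hρ1 : ρ = ρ.fst ⊗ₘ Kernel.const UnitAddCircle ν₀ := by
      rw [hρfst, Measure.compProd_const]
    have hρ2 : ρ = ρ.fst ⊗ₘ Stmt19.shiftKernel (Kernel.const UnitAddCircle ν₀) hσ₁ := by
      rw [hρfst, ← Stmt19.map_compProd_shift volume (Kernel.const UnitAddCircle ν₀) hσ₁,
        Measure.compProd_const, ← hρdef, hinv₀]
    have hae1 := ProbabilityTheory.eq_condKernel_of_measure_eq_compProd _ hρ1
    have hae2 := ProbabilityTheory.eq_condKernel_of_measure_eq_compProd _ hρ2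
    rw [hρfst] at hae1 hae2
    have hirr1 : ∀ᵐ x ∂(volume : Measure UnitAddCircle), σ₁ x ∉ ratTorus := by
      rw [MeasureTheory.ae_iff]
      refine measure_mono_null ?_ hN₁
      intro x hx
      simpa using hx
    haveI : (ae (volume : Measure UnitAddCircle)).NeBot :=
      ae_neBot.mpr (IsProbabilityMeasure.ne_zero _)
    obtain ⟨x, hx1, hx3⟩ := ((hae1.and hae2).and hirr1).exists
    have hinvx : ν₀.map (· + σ₁ x) = ν₀ := by
      have hs := hx1.2.trans hx1.1.symm
      rwa [Stmt19.shiftKernel_apply, Kernel.const_apply] at hs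
    have hν₀vol : ν₀ = volume := Stmt19.eq_volume_of_rot_invariant hx3 hinvx
    refine ⟨c.toNNReal, ?_⟩
    rw [hμprod, hprodsm, hρdef, hν₀vol, ← hvol2, ENNReal.smul_def, ENNReal.coe_toNNReal hfin]
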